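/- Let N ≥ 1 and let T be a complex symmetric N×N matrix whose imaginary part Im T is positive definite (a point of the Siegel upper half-space), and denote by T̄ its entrywise complex conjugate. Then for all column vectors h₁, h₂ ∈ ℝ^N, the integral below converges absolutely and e^{−πi·h₁ᵗh₂}·∫_{ℝ^N} e^{πi·(xᵗTx − (x+h₁)ᵗT̄(x+h₁) − 2·xᵗh₂)} dx = (2^N·det(Im T))^{−1/2}·e^{−(π/2)·(Th₁+h₂)ᵗ·(Im T)^{−1}·(T̄h₁+h₂)}, where (2^N·det(Im T))^{−1/2} is the positive real square root (det(Im T) > 0). -/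

import Mathlib

open Real MeasureTheory Matrix Complex
open scoped MatrixOrder

private lemma aux_dsum {N : ℕ} (M : Matrix (Fin N) (Fin N) ℂ) (u v : Fin N → ℂ) :
    ∑ i, ∑ j, M i j * u i * v j = u ⬝ᵥ M *ᵥ v := by
  simp only [dotProduct, mulVec, Finset.mul_sum]
  exact Finset.sum_congr rfl fun i _ => Finset.sum_congr rfl fun j _ => by ring

private lemma aux_dsum' {N : ℕ} (M : Matrix (Fin N) (Fin N) ℂ) (u v : Fin N → ℂ) :
    ∑ i, ∑ j, u i * M i j * v j = u ⬝ᵥ M *ᵥ v := by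
  rw [← aux_dsum]
  exact Finset.sum_congr rfl fun i _ => Finset.sum_congr rfl fun j _ => by ring

private lemma aux_mulVec_dot {N : ℕ} (M : Matrix (Fin N) (Fin N) ℂ) (u v : Fin N → ℂ) :
    (M *ᵥ u) ⬝ᵥ v = u ⬝ᵥ Mᵀ *ᵥ v := by
  rw [dotProduct_comm, dotProduct_mulVec, ← mulVec_transpose, dotProduct_comm]

private lemma aux_map_mulVec {N : ℕ} (M : Matrix (Fin N) (Fin N) ℝ) (v : Fin N → ℝ) :
    (fun i => ((M *ᵥ v) i : ℂ)) = (M.map Complex.ofRealHom) *ᵥ (fun i => (v i : ℂ)) := by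
  funext i
  exact RingHom.map_mulVec Complex.ofRealHom M v i

theorem stmt_19 (N : ℕ) (hN : 1 ≤ N) (T : Matrix (Fin N) (Fin N) ℂ)
    (hsymm : T.IsSymm)
    (hpos : (Matrix.of fun i j => (T i j).im : Matrix (Fin N) (Fin N) ℝ).PosDef)
    (h₁ h₂ : Fin N → ℝ) :
    let Tbar : Matrix (Fin N) (Fin N) ℂ := Matrix.of fun i j => (starRingEnd ℂ) (T i j)
    let ImT : Matrix (Fin N) (Fin N) ℝ := Matrix.of fun i j => (T i j).im
    let f : (Fin N → ℝ) → ℂ := fun x =>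
      Complex.exp ((π : ℂ) * Complex.I *
        ((∑ i, ∑ j, T i j * (x i : ℂ) * (x j : ℂ)) -
          (∑ i, ∑ j, Tbar i j * ((x i : ℂ) + (h₁ i : ℂ)) * ((x j : ℂ) + (h₁ j : ℂ))) -
          2 * ∑ i, (x i : ℂ) * (h₂ i : ℂ)))
    Integrable f ∧
    Complex.exp (-(π : ℂ) * Complex.I * ∑ i, (h₁ i : ℂ) * (h₂ i : ℂ)) *
        (∫ x : Fin N → ℝ, f x) =
      ((((2 : ℝ) ^ N * ImT.det) ^ (-(1 : ℝ) / 2) : ℝ) : ℂ) *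
        Complex.exp (-(π : ℂ) / 2 * ∑ i, ∑ j,
          ((∑ k, T i k * (h₁ k : ℂ)) + (h₂ i : ℂ)) * ((ImT⁻¹ i j : ℝ) : ℂ) *
            ((∑ k, Tbar j k * (h₁ k : ℂ)) + (h₂ j : ℂ))) := by
  intro Tbar ImT f
  classical
  have hpsd := hpos.posSemidef
  set A : Matrix (Fin N) (Fin N) ℝ := CFC.sqrt ImT with hAdef
  have hAA : A * A = ImT := CFC.sqrt_mul_sqrt_self ImT hpsd.nonneg
  have hAT : Aᵀ = A := (show A.PosSemidef from (CFC.sqrt_nonneg ImT).posSemidef).1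
  have hdetS : 0 < ImT.det := hpos.det_pos
  have hdetA2 : A.det * A.det = ImT.det := by rw [← Matrix.det_mul, hAA]
  have hdetA_nonneg : 0 ≤ A.det := by
    rw [(show A.PosSemidef from (CFC.sqrt_nonneg ImT).posSemidef).1.det_eq_prod_eigenvalues]
    exact Finset.prod_nonneg fun i _ => by
      simpa using (show A.PosSemidef from (CFC.sqrt_nonneg ImT).posSemidef).eigenvalues_nonneg i
  have hdetA : 0 < A.det := by
    rcases hdetA_nonneg.eq_or_lt with h | h
    · exfalso; rw [← hdetA2, ← h, mul_zero] at hdetS; exact lt_irrefl _ hdetS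
    · exact h
  set B : Matrix (Fin N) (Fin N) ℝ := A⁻¹ with hBdef
  have hAU : IsUnit A.det := hdetA.ne'.isUnit
  have hBA : B * A = 1 := Matrix.nonsing_inv_mul A hAU
  have hAB : A * B = 1 := Matrix.mul_nonsing_inv A hAU
  have hBT : Bᵀ = B := by rw [hBdef, Matrix.transpose_nonsing_inv, hAT]
  have hBS : B * ImT = A := by rw [← hAA, ← mul_assoc, hBA, one_mul]
  have hBSB : B * ImT * B = 1 := by rw [hBS, hAB]
  have hSinv : ImT⁻¹ = B * B := by rw [← hAA, Matrix.mul_inv_rev]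
  have hdetB : B.det = A.det⁻¹ := by
    rw [hBdef, Matrix.det_nonsing_inv, Ring.inverse_eq_inv']
  -- complexifications
  set SC : Matrix (Fin N) (Fin N) ℂ := ImT.map Complex.ofRealHom with hSCdef
  set AC : Matrix (Fin N) (Fin N) ℂ := A.map Complex.ofRealHom with hACdef
  set BC : Matrix (Fin N) (Fin N) ℂ := B.map Complex.ofRealHom with hBCdef
  set h₁C : Fin N → ℂ := fun i => (h₁ i : ℂ) with h1Cdef
  set h₂C : Fin N → ℂ := fun i => (h₂ i : ℂ) with h2Cdef
  set bC : Fin N → ℂ := Tbar *ᵥ h₁C + h₂C with hbCdef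
  set c : Fin N → ℂ := BC *ᵥ bC with hcdef
  have hBCT : BCᵀ = BC := by rw [hBCdef, ← Matrix.transpose_map, hBT]
  have hACT : ACᵀ = AC := by rw [hACdef, ← Matrix.transpose_map, hAT]
  have hTbarT : Tbarᵀ = Tbar := by
    ext i j
    simp only [Matrix.transpose_apply, Tbar, Matrix.of_apply]
    rw [← hsymm.apply i j]
  have hBCSCBC : BC * SC * BC = 1 := by
    rw [hBCdef, hSCdef, ← Matrix.map_mul, ← Matrix.map_mul, hBSB, Matrix.map_one _ (map_zero _) (map_one _)]
  have hACBC : AC * BC = 1 := by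
    rw [hACdef, hBCdef, ← Matrix.map_mul, hAB, Matrix.map_one _ (map_zero _) (map_one _)]
  have hBCSC : BC * SC = AC := by
    rw [hBCdef, hSCdef, hACdef, ← Matrix.map_mul, hBS]
  have hTentry : ∀ i k, T i k = Tbar i k + (2 * Complex.I) * SC i k := by
    intro i k
    have h := Complex.sub_conj (T i k)
    simp only [Tbar, SC, Matrix.of_apply, Matrix.map_apply, ImT, Complex.ofRealHom_eq_coe]
    push_cast at h ⊢
    linear_combination h
  have hTmat : T = Tbar + (2 * Complex.I) • SC := by
    ext i j
    simp only [Matrix.add_apply, Matrix.smul_apply, smul_eq_mul]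
    exact hTentry i j
  set K : ℂ := Complex.exp (-(π : ℂ) * Complex.I * (h₁C ⬝ᵥ Tbar *ᵥ h₁C)) with hKdef
  set g : (Fin N → ℝ) → ℂ := fun y =>
    Complex.exp (- ∑ i, (2 * (π : ℂ)) * (y i : ℂ) ^ 2
      + ∑ i, (-2 * (π : ℂ) * Complex.I * c i) * (y i : ℂ)) with hgdef
  have key : ∀ y : Fin N → ℝ, f (B *ᵥ y) = K * g y := by
    intro y
    set yC : Fin N → ℂ := fun i => (y i : ℂ) with hyCdef
    have hxC : (fun i => (((B *ᵥ y) i : ℝ) : ℂ)) = BC *ᵥ yC := aux_map_mulVec B y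
    have hfx : f (B *ᵥ y) = Complex.exp ((π : ℂ) * Complex.I *
        ((∑ i, ∑ j, T i j * (((B *ᵥ y) i : ℝ) : ℂ) * (((B *ᵥ y) j : ℝ) : ℂ)) -
          (∑ i, ∑ j, Tbar i j * ((((B *ᵥ y) i : ℝ) : ℂ) + (h₁ i : ℂ)) *
            ((((B *ᵥ y) j : ℝ) : ℂ) + (h₁ j : ℂ))) -
          2 * ∑ i, (((B *ᵥ y) i : ℝ) : ℂ) * (h₂ i : ℂ))) := rfl
    have e1 : (∑ i, ∑ j, T i j * (((B *ᵥ y) i : ℝ) : ℂ) * (((B *ᵥ y) j : ℝ) : ℂ))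
        = (BC *ᵥ yC) ⬝ᵥ T *ᵥ (BC *ᵥ yC) := by
      rw [← hxC]; exact aux_dsum T _ _
    have e2 : (∑ i, ∑ j, Tbar i j * ((((B *ᵥ y) i : ℝ) : ℂ) + (h₁ i : ℂ)) *
          ((((B *ᵥ y) j : ℝ) : ℂ) + (h₁ j : ℂ)))
        = (BC *ᵥ yC + h₁C) ⬝ᵥ Tbar *ᵥ (BC *ᵥ yC + h₁C) := by
      rw [← hxC]
      exact aux_dsum Tbar ((fun i => (((B *ᵥ y) i : ℝ) : ℂ)) + h₁C)
        ((fun i => (((B *ᵥ y) i : ℝ) : ℂ)) + h₁C)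
    have e3 : (∑ i, (((B *ᵥ y) i : ℝ) : ℂ) * (h₂ i : ℂ)) = (BC *ᵥ yC) ⬝ᵥ h₂C := by
      rw [← hxC]; rfl
    have hq : (BC *ᵥ yC) ⬝ᵥ SC *ᵥ (BC *ᵥ yC) = yC ⬝ᵥ yC := by
      rw [aux_mulVec_dot, hBCT, mulVec_mulVec, mulVec_mulVec, hBCSCBC, one_mulVec]
    have hr : (BC *ᵥ yC) ⬝ᵥ bC = yC ⬝ᵥ c := by
      rw [aux_mulVec_dot, hBCT, ← hcdef]
    have hTq : (BC *ᵥ yC) ⬝ᵥ T *ᵥ (BC *ᵥ yC)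
        = (BC *ᵥ yC) ⬝ᵥ Tbar *ᵥ (BC *ᵥ yC) + (2 * Complex.I) * (yC ⬝ᵥ yC) := by
      conv_lhs => rw [hTmat]
      rw [Matrix.add_mulVec, Matrix.smul_mulVec, dotProduct_add, dotProduct_smul,
        smul_eq_mul, hq]
    have hsymTbar : h₁C ⬝ᵥ Tbar *ᵥ (BC *ᵥ yC) = (BC *ᵥ yC) ⬝ᵥ Tbar *ᵥ h₁C := by
      rw [dotProduct_comm, aux_mulVec_dot, hTbarT]
    have hexp2 : (BC *ᵥ yC + h₁C) ⬝ᵥ Tbar *ᵥ (BC *ᵥ yC + h₁C)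
        = (BC *ᵥ yC) ⬝ᵥ Tbar *ᵥ (BC *ᵥ yC) + 2 * ((BC *ᵥ yC) ⬝ᵥ Tbar *ᵥ h₁C)
          + h₁C ⬝ᵥ Tbar *ᵥ h₁C := by
      rw [Matrix.mulVec_add, add_dotProduct, dotProduct_add, dotProduct_add, hsymTbar]
      ring
    have hbsplit : (BC *ᵥ yC) ⬝ᵥ bC
        = (BC *ᵥ yC) ⬝ᵥ (Tbar *ᵥ h₁C) + (BC *ᵥ yC) ⬝ᵥ h₂C := by
      rw [hbCdef, dotProduct_add]
    have hyc : yC ⬝ᵥ c = (BC *ᵥ yC) ⬝ᵥ (Tbar *ᵥ h₁C) + (BC *ᵥ yC) ⬝ᵥ h₂C := by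
      rw [← hr, hbsplit]
    have hsum1 : ∑ i, (2 * (π : ℂ)) * (yC i) ^ 2 = 2 * π * (yC ⬝ᵥ yC) := by
      simp only [dotProduct, Finset.mul_sum]
      exact Finset.sum_congr rfl fun i _ => by ring
    have hsum2 : ∑ i, (-2 * (π : ℂ) * Complex.I * c i) * (yC i)
        = -2 * π * Complex.I * (yC ⬝ᵥ c) := by
      simp only [dotProduct, Finset.mul_sum]
      exact Finset.sum_congr rfl fun i _ => by ring
    have hgy : g y = Complex.exp (- ∑ i, (2 * (π : ℂ)) * (yC i) ^ 2
        + ∑ i, (-2 * (π : ℂ) * Complex.I * c i) * (yC i)) := rfl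
    rw [hfx, e1, e2, e3, hgy, hKdef, ← Complex.exp_add]
    apply congrArg
    rw [hTq, hexp2, hsum1, hsum2, hyc]
    linear_combination (2 * (π : ℂ) * (yC ⬝ᵥ yC)) * Complex.I_sq
  -- integrability and value of ∫ g
  have hbpos : ∀ i : Fin N, 0 < ((fun _ : Fin N => 2 * (π : ℂ)) i).re := by
    intro i
    simp [Real.pi_pos]
  have hgint : Integrable g := by
    rw [hgdef]
    exact GaussianFourier.integrable_cexp_neg_sum_mul_add hbpos (fun i => -2 * (π : ℂ) * Complex.I * c i)
  have hgval : ∫ y : Fin N → ℝ, g y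
      = ∏ i, ((π : ℂ) / (2 * π)) ^ (1/2 : ℂ) *
          Complex.exp ((-2 * (π : ℂ) * Complex.I * c i) ^ 2 / (4 * (2 * π))) := by
    rw [hgdef]
    exact GaussianFourier.integral_cexp_neg_sum_mul_add hbpos (fun i => -2 * (π : ℂ) * Complex.I * c i)
  have hπC : (π : ℂ) ≠ 0 := Complex.ofReal_ne_zero.2 Real.pi_ne_zero
  have hprod : ∀ i : Fin N, ((π : ℂ) / (2 * π)) ^ (1/2 : ℂ) *
        Complex.exp ((-2 * (π : ℂ) * Complex.I * c i) ^ 2 / (4 * (2 * π)))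
      = ((1/2 : ℂ) ^ (1/2 : ℂ)) * Complex.exp (-(π : ℂ) / 2 * (c i) ^ 2) := by
    intro i
    congr 2
    · rw [div_eq_div_iff (by simp [hπC]) (by norm_num)]
      ring
    · rw [div_eq_iff (by simp [hπC] : (4 * (2 * (π : ℂ))) ≠ 0)]
      linear_combination (4 * (π : ℂ) ^ 2 * (c i) ^ 2) * Complex.I_sq
  have hgval2 : ∫ y : Fin N → ℝ, g y
      = ((1/2 : ℂ) ^ (1/2 : ℂ)) ^ N * Complex.exp (-(π : ℂ) / 2 * (c ⬝ᵥ c)) := by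
    rw [hgval, Finset.prod_congr rfl (fun i _ => hprod i), Finset.prod_mul_distrib,
      Finset.prod_const, ← Complex.exp_sum, Finset.card_univ, Fintype.card_fin]
    congr 1
    rw [← Finset.mul_sum]
    congr 1
    simp only [dotProduct, sq]
  -- change of variables
  have hBA' : Matrix.toLin' B ∘ₗ Matrix.toLin' A = LinearMap.id := by
    rw [← Matrix.toLin'_mul, hBA, Matrix.toLin'_one]
  have hAB' : Matrix.toLin' A ∘ₗ Matrix.toLin' B = LinearMap.id := by
    rw [← Matrix.toLin'_mul, hAB, Matrix.toLin'_one]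
  set eL : (Fin N → ℝ) ≃ₗ[ℝ] (Fin N → ℝ) :=
    LinearEquiv.ofLinear (Matrix.toLin' B) (Matrix.toLin' A) hBA' hAB' with heLdef
  set eM : (Fin N → ℝ) ≃ᵐ (Fin N → ℝ) :=
    eL.toContinuousLinearEquiv.toHomeomorph.toMeasurableEquiv with heMdef
  have hemb : MeasurableEmbedding (⇑eM) := eM.measurableEmbedding
  have hcoe : (⇑eM : (Fin N → ℝ) → (Fin N → ℝ)) = ⇑(Matrix.toLin' B) := rfl
  have hdetB' : B.det ≠ 0 := by rw [hdetB]; exact inv_ne_zero hdetA.ne'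
  have hmap2 : Measure.map (⇑eM) volume = ENNReal.ofReal A.det • volume := by
    rw [hcoe]
    have := Real.map_matrix_volume_pi_eq_smul_volume_pi hdetB'
    rw [this]
    congr 1
    rw [hdetB, inv_inv, abs_of_pos hdetA]
  have hcompg : (f ∘ ⇑eM) = fun y => K * g y := by
    funext y
    show f (eM y) = K * g y
    rw [show (eM y) = B *ᵥ y from Matrix.toLin'_apply B y]
    exact key y
  have hfint_map : Integrable f (Measure.map (⇑eM) volume) := by
    rw [hemb.integrable_map_iff, hcompg]
    exact hgint.const_mul K
  have hfint : Integrable f := by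
    rw [hmap2] at hfint_map
    exact (integrable_smul_measure (by simp [ENNReal.ofReal_eq_zero, not_le.2 hdetA]) ENNReal.ofReal_ne_top).mp hfint_map
  have hInt2 : ∫ x, f x ∂(Measure.map (⇑eM) volume) = K * ∫ y, g y := by
    rw [hemb.integral_map]
    have : (fun y => f (eM y)) = fun y => K * g y := hcompg
    rw [this, integral_const_mul]
  have hInt3 : ∫ x, f x ∂(Measure.map (⇑eM) volume) = (A.det) • ∫ x, f x := by
    rw [hmap2, integral_smul_measure, ENNReal.toReal_ofReal hdetA.le]
  have hIntf : ∫ x, f x = (A.det⁻¹ : ℝ) • (K * ∫ y, g y) := by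
    rw [← hInt2, hInt3, smul_smul, inv_mul_cancel₀ hdetA.ne', one_smul]
  -- RHS quadratic form identity
  set aC : Fin N → ℂ := T *ᵥ h₁C + h₂C with haCdef
  have haC : BC *ᵥ aC = c + (2 * Complex.I) • (AC *ᵥ h₁C) := by
    have h1 : aC = bC + (2 * Complex.I) • (SC *ᵥ h₁C) := by
      rw [haCdef, hbCdef]
      conv_lhs => rw [hTmat]
      rw [Matrix.add_mulVec, Matrix.smul_mulVec]
      funext i
      simp only [Pi.add_apply, Pi.smul_apply, smul_eq_mul]
      ring
    rw [h1, Matrix.mulVec_add, Matrix.mulVec_smul, mulVec_mulVec, hBCSC, ← hcdef]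
  have hRHSsum : (∑ i, ∑ j,
        ((∑ k, T i k * (h₁ k : ℂ)) + (h₂ i : ℂ)) * ((ImT⁻¹ i j : ℝ) : ℂ) *
          ((∑ k, Tbar j k * (h₁ k : ℂ)) + (h₂ j : ℂ)))
      = c ⬝ᵥ c + (2 * Complex.I) * (h₁C ⬝ᵥ Tbar *ᵥ h₁C + h₁C ⬝ᵥ h₂C) := by
    have e0 : (∑ i, ∑ j,
        ((∑ k, T i k * (h₁ k : ℂ)) + (h₂ i : ℂ)) * ((ImT⁻¹ i j : ℝ) : ℂ) *
          ((∑ k, Tbar j k * (h₁ k : ℂ)) + (h₂ j : ℂ)))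
        = aC ⬝ᵥ ((ImT⁻¹).map Complex.ofRealHom) *ᵥ bC := aux_dsum' _ aC bC
    rw [e0]
    have hSinvC : (ImT⁻¹).map Complex.ofRealHom = BC * BC := by
      rw [hSinv, Matrix.map_mul]
    rw [hSinvC, ← mulVec_mulVec, dotProduct_mulVec, ← Matrix.mulVec_transpose, hBCT, ← hcdef,
      haC, add_dotProduct, smul_dotProduct, smul_eq_mul]
    have hACc : (AC *ᵥ h₁C) ⬝ᵥ c = h₁C ⬝ᵥ Tbar *ᵥ h₁C + h₁C ⬝ᵥ h₂C := by
      rw [hcdef, aux_mulVec_dot, hACT, mulVec_mulVec, hACBC, one_mulVec, hbCdef,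
        dotProduct_add]
    rw [hACc]
  -- constants
  have hhalfC : ((1/2 : ℂ)) ^ ((1/2 : ℂ)) = (((1/2 : ℝ) ^ ((1/2) : ℝ) : ℝ) : ℂ) := by
    have h := Complex.ofReal_cpow (by norm_num : (0:ℝ) ≤ 1/2) (1/2 : ℝ)
    push_cast at h
    exact h.symm
  have hconst : A.det⁻¹ * ((1/2 : ℝ) ^ ((1/2) : ℝ)) ^ N
      = ((2:ℝ) ^ N * ImT.det) ^ (-(1:ℝ)/2) := by
    have h1 : ((1/2 : ℝ) ^ ((1/2) : ℝ)) = (Real.sqrt 2)⁻¹ := by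
      rw [← Real.sqrt_eq_rpow]
      rw [show (1/2 : ℝ) = (2:ℝ)⁻¹ by norm_num, Real.sqrt_inv]
    have h2 : (2:ℝ) ^ N * ImT.det = ((Real.sqrt 2) ^ N * A.det) ^ 2 := by
      rw [← hdetA2, mul_pow, ← pow_mul, mul_comm N 2, pow_mul,
        Real.sq_sqrt (by norm_num : (0:ℝ) ≤ 2)]
      ring
    rw [h1, h2]
    have hspos : 0 < (Real.sqrt 2) ^ N * A.det := by positivity
    rw [← Real.rpow_natCast ((Real.sqrt 2) ^ N * A.det) 2, ← Real.rpow_mul hspos.le]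
    norm_num
    rw [Real.rpow_neg_one, mul_inv]
    ring
  -- final assembly
  refine ⟨hfint, ?_⟩
  have hsum12 : (∑ i, (h₁ i : ℂ) * (h₂ i : ℂ)) = h₁C ⬝ᵥ h₂C := rfl
  rw [hIntf, hgval2, hRHSsum, hsum12, Complex.real_smul, hKdef, hhalfC]
  rw [show (Complex.exp (-(π:ℂ) * Complex.I * (h₁C ⬝ᵥ h₂C)) *
      (((A.det⁻¹ : ℝ) : ℂ) * (Complex.exp (-(π:ℂ) * Complex.I * (h₁C ⬝ᵥ Tbar *ᵥ h₁C)) *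
        ((((1/2 : ℝ) ^ ((1/2):ℝ) : ℝ) : ℂ) ^ N *
          Complex.exp (-(π:ℂ)/2 * (c ⬝ᵥ c))))))
      = (((A.det⁻¹ : ℝ) : ℂ) * (((1/2 : ℝ) ^ ((1/2):ℝ) : ℝ) : ℂ) ^ N) *
        Complex.exp (-(π:ℂ) * Complex.I * (h₁C ⬝ᵥ h₂C) +
          (-(π:ℂ) * Complex.I * (h₁C ⬝ᵥ Tbar *ᵥ h₁C)) + -(π:ℂ)/2 * (c ⬝ᵥ c)) from by
    rw [Complex.exp_add, Complex.exp_add]; ring]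
  congr 1
  · rw [← Complex.ofReal_pow, ← Complex.ofReal_mul, hconst]
  · apply congrArg
    ring
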